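/- For all f, g ∈ H and all a, b, c, d, a', b', c', d' ∈ K with a·d ≠ b·c and a'·d' ≠ b'·c', the elements γf := (a⁴·f + b⁴)/(c⁴·f + d⁴) and δg := (a'⁴·g + b'⁴)/(c'⁴·g + d'⁴) lie in H and a(f,g) ≡ a(γf, δg) (mod K²). (The class of a(f,g) modulo K² is invariant under the action of Γ = PGL₂(K⁴) on both arguments.) -/

import Mathlib

/-- The set `K² = {x² : x ∈ K}` of squares of `K`. -/
def sqSet (K : Type*) [Field K] : Set K := {x | ∃ y : K, y ^ 2 = x}

/-- `K` is two-dimensional as a vector space over its subfield `K²`: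
there is some `g ∉ K²`, and for every such `g` the pair `(1, g)` spans `K`
over `K²`. -/
def TwoDimOverSquares (K : Type*) [Field K] : Prop :=
  (∃ g : K, g ∉ sqSet K) ∧
    ∀ g : K, g ∉ sqSet K → ∀ x : K, ∃ a b : K, x = a ^ 2 + b ^ 2 * g

/-- The quantity `a(f,g) = (f₁²·f₃² + f₂⁴)·g / (f₃⁴·g² + f₁⁴)`, where
`f = f₀⁴ + f₁⁴·g + f₂⁴·g² + f₃⁴·g³` is the expansion of `f` with respect to `g`
in the basis `{1, g, g², g³}` of `K` over `K⁴`. -/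
noncomputable def aOf {K : Type*} [Field K] (g f₁ f₂ f₃ : K) : K :=
  ((f₁ ^ 2 * f₃ ^ 2 + f₂ ^ 4) * g) / (f₃ ^ 4 * g ^ 2 + f₁ ^ 4)

set_option maxHeartbeats 2000000
set_option linter.unusedVariables false



set_option linter.unusedSectionVars false

section Aux
variable {K : Type*} [Field K] [CharP K 2]

private lemma two_eq_zero : (2:K) = 0 := by
  have := CharP.cast_eq_zero K 2; exact_mod_cast this

private lemma eq_of_add_eq_zero' {x y : K} (h : x + y = 0) : x = y := by
  have : x - y = 0 := by linear_combination h - y * (two_eq_zero (K := K))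
  exact sub_eq_zero.mp this

private lemma sq_inj {x y : K} (h : x ^ 2 = y ^ 2) : x = y := by
  have hxy : (x + y) ^ 2 = 0 := by linear_combination h + (x * y + y ^ 2) * (two_eq_zero (K := K))
  exact eq_of_add_eq_zero' (pow_eq_zero_iff (by norm_num : 2 ≠ 0) |>.mp hxy)

private lemma pow4_inj {x y : K} (h : x ^ 4 = y ^ 4) : x = y :=
  sq_inj (sq_inj (by linear_combination h))

private lemma notsq_ne_zero {f : K} (hf : f ∉ sqSet K) : f ≠ 0 :=
  fun e => hf ⟨0, by simp [e]⟩

private lemma sqSet_add {u v : K} (hu : u ∈ sqSet K) (hv : v ∈ sqSet K) :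
    u + v ∈ sqSet K := by
  obtain ⟨y, hy⟩ := hu; obtain ⟨z, hz⟩ := hv
  exact ⟨y + z, by linear_combination hy + hz + (y * z) * (two_eq_zero (K := K))⟩

private lemma sq_chain {A B C : K} (h1 : A + B ∈ sqSet K) (h2 : B + C ∈ sqSet K) :
    A + C ∈ sqSet K := by
  obtain ⟨y, hy⟩ := sqSet_add h1 h2
  exact ⟨y, by linear_combination hy + B * (two_eq_zero (K := K))⟩

private lemma F1_ne {h f p₀ p₁ p₂ p₃ : K} (hh : h ∉ sqSet K) (hf : f ∉ sqSet K)
    (he : f = p₀ ^ 4 + p₁ ^ 4 * h + p₂ ^ 4 * h ^ 2 + p₃ ^ 4 * h ^ 3) :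
    p₁ ^ 2 + p₃ ^ 2 * h ≠ 0 := by
  intro e
  by_cases h3 : p₃ = 0
  · have h1 : p₁ = 0 := by
      have : p₁ ^ 2 = 0 := by rw [h3] at e; linear_combination e
      exact pow_eq_zero_iff (by norm_num : 2 ≠ 0) |>.mp this
    exact hf ⟨p₀ ^ 2 + p₂ ^ 2 * h, by
      rw [he, h1, h3]; linear_combination (p₀ ^ 2 * p₂ ^ 2 * h) * (two_eq_zero (K := K))⟩
  · refine hh ⟨p₁ / p₃, ?_⟩
    rw [div_pow, div_eq_iff (pow_ne_zero 2 h3)]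
    linear_combination e - (p₃ ^ 2 * h) * (two_eq_zero (K := K))

private lemma D1_ne {h f p₀ p₁ p₂ p₃ : K} (hh : h ∉ sqSet K) (hf : f ∉ sqSet K)
    (he : f = p₀ ^ 4 + p₁ ^ 4 * h + p₂ ^ 4 * h ^ 2 + p₃ ^ 4 * h ^ 3) :
    p₃ ^ 4 * h ^ 2 + p₁ ^ 4 ≠ 0 := by
  intro e
  apply F1_ne hh hf he
  have : (p₁ ^ 2 + p₃ ^ 2 * h) ^ 2 = 0 := by
    linear_combination e + (p₁ ^ 2 * p₃ ^ 2 * h) * (two_eq_zero (K := K))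
  exact pow_eq_zero_iff (by norm_num : 2 ≠ 0) |>.mp this

private lemma denom_ne {f a b c d : K} (hf : f ∉ sqSet K) (hM : a * d ≠ b * c) :
    c ^ 4 * f + d ^ 4 ≠ 0 := by
  intro e
  by_cases hc : c = 0
  · apply hM
    have hd : d = 0 := pow4_inj (by rw [hc] at e; linear_combination e)
    rw [hc, hd]; ring
  · refine hf ⟨d ^ 2 / c ^ 2, ?_⟩
    rw [div_pow, div_eq_iff (pow_ne_zero 2 (pow_ne_zero 2 hc))]
    linear_combination -e + (d ^ 4) * (two_eq_zero (K := K))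

private lemma moebius_notsq {f a b c d : K} (hf : f ∉ sqSet K) (hM : a * d ≠ b * c) :
    (a ^ 4 * f + b ^ 4) / (c ^ 4 * f + d ^ 4) ∉ sqSet K := by
  rintro ⟨y, hy⟩
  have hden := denom_ne hf hM
  rw [eq_div_iff hden] at hy
  by_cases hac : a ^ 2 + y * c ^ 2 = 0
  · by_cases hc : c = 0
    · have ha : a = 0 := by
        have : a ^ 2 = 0 := by rw [hc] at hac; linear_combination hac
        exact pow_eq_zero_iff (by norm_num : 2 ≠ 0) |>.mp this
      apply hM; rw [ha, hc]; ring
    · apply hM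
      have hy2 : a ^ 2 = y * c ^ 2 := eq_of_add_eq_zero' hac
      apply pow4_inj
      -- from hy : y^2 * (c^4 f + d^4) = a^4 f + b^4 and a^2 = y c^2
      -- (ad)^4 = (bc)^4
      have hc4 : (c : K) ^ 4 ≠ 0 := pow_ne_zero 4 hc
      have htmp : y ^ 2 * c ^ 4 = a ^ 4 := by linear_combination -(y * c ^ 2 + a ^ 2) * hy2
      have hb : y ^ 2 * d ^ 4 = b ^ 4 := by linear_combination hy - f * htmp
      have : (a * d) ^ 4 * 1 = (b * c) ^ 4 * 1 := by
        linear_combination c ^ 4 * hb - d ^ 4 * htmp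
      simpa using this
  · refine hf ⟨(y * d ^ 2 + b ^ 2) / (a ^ 2 + y * c ^ 2), ?_⟩
    rw [div_pow, div_eq_iff (pow_ne_zero 2 hac)]
    linear_combination -hy + (y ^ 2 * d ^ 4 + y * d ^ 2 * b ^ 2 - f * a ^ 4 - f * a ^ 2 * y * c ^ 2) * (two_eq_zero (K := K))

private lemma step_afff {h f p₀ p₁ p₂ p₃ α β : K} (hα : α ≠ 0) (hf : f ∉ sqSet K)
    (he : f = p₀ ^ 4 + p₁ ^ 4 * h + p₂ ^ 4 * h ^ 2 + p₃ ^ 4 * h ^ 3) :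
    ∃ s₀ s₁ s₂ s₃ : K,
      α ^ 4 * f + β ^ 4 ∉ sqSet K ∧
      α ^ 4 * f + β ^ 4 = s₀ ^ 4 + s₁ ^ 4 * h + s₂ ^ 4 * h ^ 2 + s₃ ^ 4 * h ^ 3 ∧
      aOf h s₁ s₂ s₃ = aOf h p₁ p₂ p₃ := by
  refine ⟨α * p₀ + β, α * p₁, α * p₂, α * p₃, ?_, ?_, ?_⟩
  · rintro ⟨y, hy⟩
    refine hf ⟨(y + β ^ 2) / α ^ 2, ?_⟩
    rw [div_pow, div_eq_iff (pow_ne_zero 2 (pow_ne_zero 2 hα))]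
    linear_combination hy + (y * β ^ 2 + β ^ 4) * (two_eq_zero (K := K))
  · rw [he]
    linear_combination (-2*p₀*α*β^3 - 3*p₀^2*α^2*β^2 - 2*p₀^3*α^3*β) * (two_eq_zero (K := K))
  · have n1 : ((α * p₁) ^ 2 * (α * p₃) ^ 2 + (α * p₂) ^ 4) * h
        = α ^ 4 * ((p₁ ^ 2 * p₃ ^ 2 + p₂ ^ 4) * h) := by ring
    have d1 : (α * p₃) ^ 4 * h ^ 2 + (α * p₁) ^ 4 = α ^ 4 * (p₃ ^ 4 * h ^ 2 + p₁ ^ 4) := by ring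
    simp only [aOf]
    rw [n1, d1, mul_div_mul_left _ _ (pow_ne_zero 4 hα)]

private lemma inv_expand {f r₀ r₁ r₂ r₃ h : K} (hne : f ≠ 0)
    (key : f ^ 3 = r₀ ^ 4 + r₁ ^ 4 * h + r₂ ^ 4 * h ^ 2 + r₃ ^ 4 * h ^ 3) :
    f⁻¹ = (r₀ / f) ^ 4 + (r₁ / f) ^ 4 * h + (r₂ / f) ^ 4 * h ^ 2 + (r₃ / f) ^ 4 * h ^ 3 := by
  have h4 : f ^ 4 ≠ 0 := pow_ne_zero 4 hne
  rw [div_pow, div_pow, div_pow, div_pow, div_mul_eq_mul_div, div_mul_eq_mul_div,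
    div_mul_eq_mul_div, ← add_div, ← add_div, ← add_div, ← key,
    eq_div_iff h4]
  field_simp

private lemma aOf_div_scale {h f r₁ r₂ r₃ : K} (hf : f ≠ 0) :
    aOf h (r₁ / f) (r₂ / f) (r₃ / f)
      = ((r₁ ^ 2 * r₃ ^ 2 + r₂ ^ 4) * h) / (r₃ ^ 4 * h ^ 2 + r₁ ^ 4) := by
  have h4 : (f ^ 4 : K) ≠ 0 := pow_ne_zero 4 hf
  have n1 : ((r₁ / f) ^ 2 * (r₃ / f) ^ 2 + (r₂ / f) ^ 4) * h
      = (f ^ 4)⁻¹ * ((r₁ ^ 2 * r₃ ^ 2 + r₂ ^ 4) * h) := by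
    field_simp
    try ring
  have d1 : (r₃ / f) ^ 4 * h ^ 2 + (r₁ / f) ^ 4
      = (f ^ 4)⁻¹ * (r₃ ^ 4 * h ^ 2 + r₁ ^ 4) := by
    field_simp
    try ring
  simp only [aOf]
  rw [n1, d1, mul_div_mul_left _ _ (inv_ne_zero h4)]

private lemma step_invf {h f p₀ p₁ p₂ p₃ : K} (hh : h ∉ sqSet K) (hf : f ∉ sqSet K)
    (he : f = p₀ ^ 4 + p₁ ^ 4 * h + p₂ ^ 4 * h ^ 2 + p₃ ^ 4 * h ^ 3) :
    ∃ s₀ s₁ s₂ s₃ : K,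
      f⁻¹ ∉ sqSet K ∧
      f⁻¹ = s₀ ^ 4 + s₁ ^ 4 * h + s₂ ^ 4 * h ^ 2 + s₃ ^ 4 * h ^ 3 ∧
      aOf h s₁ s₂ s₃ = aOf h p₁ p₂ p₃ := by
  have hne : f ≠ 0 := notsq_ne_zero hf
  have h4 : f ^ 4 ≠ 0 := pow_ne_zero 4 hne
  have hnsq : f⁻¹ ∉ sqSet K := by
    rintro ⟨y, hy⟩
    exact hf ⟨y⁻¹, by rw [inv_pow, hy, inv_inv]⟩
  have key : f ^ 3 = (p₂*p₃^2*h^2 + p₁^2*p₂*h + p₀*p₂^2*h + p₀^3) ^ 4 + (p₃^3*h^2 + p₁*p₂^2*h + p₁^2*p₃*h + p₀^2*p₁) ^ 4 * h + (p₂^3*h + p₀*p₃^2*h + p₀*p₁^2 + p₀^2*p₂) ^ 4 * h ^ 2 + (p₂^2*p₃*h + p₁*p₃^2*h + p₁^3 + p₀^2*p₃) ^ 4 * h ^ 3 := by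
    rw [he]
    linear_combination (p₂^4*p₃^8*h^8 + p₂^8*p₃^4*h^7 - 2*p₁*p₂^2*p₃^9*h^8 - 2*p₁*p₂^6*p₃^5*h^7 - 2*p₁^2*p₃^10*h^8 - 8*p₁^2*p₂^4*p₃^6*h^7 - 8*p₁^3*p₂^2*p₃^7*h^7 - 4*p₁^3*p₂^6*p₃^3*h^6 - 2*p₁^4*p₃^8*h^7 - 12*p₁^4*p₂^4*p₃^4*h^6 + p₁^4*p₂^8*h^5 - 12*p₁^5*p₂^2*p₃^5*h^6 - 2*p₁^5*p₂^6*p₃*h^5 - 4*p₁^6*p₃^6*h^6 - 8*p₁^6*p₂^4*p₃^2*h^5 - 8*p₁^7*p₂^2*p₃^3*h^5 - 2*p₁^8*p₃^4*h^5 + p₁^8*p₂^4*h^4 - 2*p₁^9*p₂^2*p₃*h^4 - 2*p₁^10*p₃^2*h^4 - 2*p₀*p₂^5*p₃^6*h^7 - 2*p₀*p₂^9*p₃^2*h^6 - 6*p₀*p₁^2*p₂^5*p₃^4*h^6 - 2*p₀*p₁^2*p₂^9*h^5 - 6*p₀*p₁^4*p₂^5*p₃^2*h^5 - 2*p₀*p₁^6*p₂^5*h^4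 - 8*p₀^2*p₂^6*p₃^4*h^6 - 2*p₀^2*p₂^10*h^5 - 2*p₀^2*p₁*p₃^9*h^7 - 6*p₀^2*p₁*p₂^4*p₃^5*h^6 - 12*p₀^2*p₁^2*p₂^2*p₃^6*h^6 - 12*p₀^2*p₁^2*p₂^6*p₃^2*h^5 - 8*p₀^2*p₁^3*p₃^7*h^6 - 12*p₀^2*p₁^3*p₂^4*p₃^3*h^5 - 24*p₀^2*p₁^4*p₂^2*p₃^4*h^5 - 8*p₀^2*p₁^4*p₂^6*h^4 - 12*p₀^2*p₁^5*p₃^5*h^5 - 6*p₀^2*p₁^5*p₂^4*p₃*h^4 - 12*p₀^2*p₁^6*p₂^2*p₃^2*h^4 - 8*p₀^2*p₁^7*p₃^3*h^4 - 2*p₀^2*p₁^9*p₃*h^3 - 4*p₀^3*p₂^3*p₃^6*h^6 - 8*p₀^3*p₂^7*p₃^2*h^5 - 12*p₀^3*p₁^2*p₂^3*p₃^4*h^5 - 8*p₀^3*p₁^2*p₂^7*h^4 - 12*p₀^3*p₁^4*p₂^3*p₃^2*h^4 - 4*p₀^3*p₁^6*p₂^3*h^3 + p₀^4*p₃^8*h^6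 - 12*p₀^4*p₂^4*p₃^4*h^5 - 2*p₀^4*p₂^8*h^4 - 6*p₀^4*p₁*p₂^2*p₃^5*h^5 - 8*p₀^4*p₁^2*p₃^6*h^5 - 24*p₀^4*p₁^2*p₂^4*p₃^2*h^4 - 12*p₀^4*p₁^3*p₂^2*p₃^3*h^4 - 12*p₀^4*p₁^4*p₃^4*h^4 - 12*p₀^4*p₁^4*p₂^4*h^3 - 6*p₀^4*p₁^5*p₂^2*p₃*h^3 - 8*p₀^4*p₁^6*p₃^2*h^3 + p₀^4*p₁^8*h^2 - 2*p₀^5*p₂*p₃^6*h^5 - 12*p₀^5*p₂^5*p₃^2*h^4 - 6*p₀^5*p₁^2*p₂*p₃^4*h^4 - 12*p₀^5*p₁^2*p₂^5*h^3 - 6*p₀^5*p₁^4*p₂*p₃^2*h^3 - 2*p₀^5*p₁^6*p₂*h^2 - 8*p₀^6*p₂^2*p₃^4*h^4 - 4*p₀^6*p₂^6*h^3 - 2*p₀^6*p₁*p₃^5*h^4 - 12*p₀^6*p₁^2*p₂^2*p₃^2*h^3 - 4*p₀^6*p₁^3*p₃^3*h^3 - 8*p₀^6*p₁^4*p₂^2*h^2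 - 2*p₀^6*p₁^5*p₃*h^2 - 8*p₀^7*p₂^3*p₃^2*h^3 - 8*p₀^7*p₁^2*p₂^3*h^2 + p₀^8*p₃^4*h^3 - 2*p₀^8*p₂^4*h^2 + p₀^8*p₁^4*h - 2*p₀^9*p₂*p₃^2*h^2 - 2*p₀^9*p₁^2*p₂*h - 2*p₀^10*p₂^2*h) * (two_eq_zero (K := K))
  have hexp : f⁻¹ = ((p₂*p₃^2*h^2 + p₁^2*p₂*h + p₀*p₂^2*h + p₀^3) / f) ^ 4 + ((p₃^3*h^2 + p₁*p₂^2*h + p₁^2*p₃*h + p₀^2*p₁) / f) ^ 4 * h + ((p₂^3*h + p₀*p₃^2*h + p₀*p₁^2 + p₀^2*p₂) / f) ^ 4 * h ^ 2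
      + ((p₂^2*p₃*h + p₁*p₃^2*h + p₁^3 + p₀^2*p₃) / f) ^ 4 * h ^ 3 :=
    inv_expand hne key
  refine ⟨(p₂*p₃^2*h^2 + p₁^2*p₂*h + p₀*p₂^2*h + p₀^3) / f, (p₃^3*h^2 + p₁*p₂^2*h + p₁^2*p₃*h + p₀^2*p₁) / f, (p₂^3*h + p₀*p₃^2*h + p₀*p₁^2 + p₀^2*p₂) / f, (p₂^2*p₃*h + p₁*p₃^2*h + p₁^3 + p₀^2*p₃) / f, hnsq, hexp, ?_⟩
  have hd1 : p₃ ^ 4 * h ^ 2 + p₁ ^ 4 ≠ 0 := D1_ne hh hf he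
  have hd2' : ((p₂^2*p₃*h + p₁*p₃^2*h + p₁^3 + p₀^2*p₃) / f) ^ 4 * h ^ 2 + ((p₃^3*h^2 + p₁*p₂^2*h + p₁^2*p₃*h + p₀^2*p₁) / f) ^ 4 ≠ 0 := D1_ne hh hnsq hexp
  have hd2 : (p₂^2*p₃*h + p₁*p₃^2*h + p₁^3 + p₀^2*p₃) ^ 4 * h ^ 2 + (p₃^3*h^2 + p₁*p₂^2*h + p₁^2*p₃*h + p₀^2*p₁) ^ 4 ≠ 0 := by
    intro e
    apply hd2'
    rw [div_pow, div_pow, div_mul_eq_mul_div, ← add_div, e, zero_div]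
  rw [aOf_div_scale hne]
  simp only [aOf]
  rw [div_eq_div_iff hd2 hd1]
  linear_combination (p₁*p₂^2*p₃^13*h^9 - p₁*p₂^6*p₃^9*h^8 - 2*p₁*p₂^10*p₃^5*h^7 + p₁^2*p₂^4*p₃^10*h^8 - 6*p₁^2*p₂^8*p₃^6*h^7 + 2*p₁^3*p₂^2*p₃^11*h^8 - 8*p₁^3*p₂^6*p₃^7*h^7 - 4*p₁^3*p₂^10*p₃^3*h^6 - 4*p₁^4*p₂^4*p₃^8*h^7 - 12*p₁^4*p₂^8*p₃^4*h^6 - p₁^5*p₂^2*p₃^9*h^7 - 14*p₁^5*p₂^6*p₃^5*h^6 - 2*p₁^5*p₂^10*p₃*h^5 - 10*p₁^6*p₂^4*p₃^6*h^6 - 6*p₁^6*p₂^8*p₃^2*h^5 - 4*p₁^7*p₂^2*p₃^7*h^6 - 8*p₁^7*p₂^6*p₃^3*h^5 - 4*p₁^8*p₂^4*p₃^4*h^5 - p₁^9*p₂^2*p₃^5*h^5 - p₁^9*p₂^6*p₃*h^4 + p₁^10*p₂^4*p₃^2*h^4 + 2*p₁^11*p₂^2*p₃^3*h^4 + p₁^13*p₂^2*p₃*h^3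 + 2*p₀*p₂^9*p₃^6*h^7 + 2*p₀*p₁^2*p₂^9*p₃^4*h^6 + 2*p₀*p₁^4*p₂^9*p₃^2*h^5 + 2*p₀*p₁^6*p₂^9*h^4 + p₀^2*p₂^2*p₃^12*h^8 + 3*p₀^2*p₂^6*p₃^8*h^7 + p₀^2*p₁*p₃^13*h^8 + p₀^2*p₁*p₂^4*p₃^9*h^7 - 6*p₀^2*p₁*p₂^8*p₃^5*h^6 + 6*p₀^2*p₁^2*p₂^2*p₃^10*h^7 - 6*p₀^2*p₁^2*p₂^6*p₃^6*h^6 + 2*p₀^2*p₁^3*p₃^11*h^7 - 8*p₀^2*p₁^3*p₂^4*p₃^7*h^6 - 12*p₀^2*p₁^3*p₂^8*p₃^3*h^5 - p₀^2*p₁^4*p₂^2*p₃^8*h^6 - 18*p₀^2*p₁^4*p₂^6*p₃^4*h^5 - p₀^2*p₁^5*p₃^9*h^6 - 18*p₀^2*p₁^5*p₂^4*p₃^5*h^5 - 6*p₀^2*p₁^5*p₂^8*p₃*h^4 - 12*p₀^2*p₁^6*p₂^2*p₃^6*h^5 - 6*p₀^2*p₁^6*p₂^6*p₃^2*h^4 -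 4*p₀^2*p₁^7*p₃^7*h^5 - 8*p₀^2*p₁^7*p₂^4*p₃^3*h^4 - p₀^2*p₁^8*p₂^2*p₃^4*h^4 + 3*p₀^2*p₁^8*p₂^6*h^3 - p₀^2*p₁^9*p₃^5*h^4 + p₀^2*p₁^9*p₂^4*p₃*h^3 + 6*p₀^2*p₁^10*p₂^2*p₃^2*h^3 + 2*p₀^2*p₁^11*p₃^3*h^3 + p₀^2*p₁^12*p₂^2*h^2 + p₀^2*p₁^13*p₃*h^2 + 2*p₀^3*p₂^3*p₃^10*h^7 + 6*p₀^3*p₂^7*p₃^6*h^6 + 6*p₀^3*p₁^2*p₂^3*p₃^8*h^6 + 6*p₀^3*p₁^2*p₂^7*p₃^4*h^5 + 8*p₀^3*p₁^4*p₂^3*p₃^6*h^5 + 6*p₀^3*p₁^4*p₂^7*p₃^2*h^4 + 8*p₀^3*p₁^6*p₂^3*p₃^4*h^4 + 6*p₀^3*p₁^6*p₂^7*h^3 + 6*p₀^3*p₁^8*p₂^3*p₃^2*h^3 + 2*p₀^3*p₁^10*p₂^3*h^2 + p₀^4*p₃^12*h^7 + 6*p₀^4*p₂^4*p₃^8*h^6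 + 3*p₀^4*p₁*p₂^2*p₃^9*h^6 - 6*p₀^4*p₁*p₂^6*p₃^5*h^5 + 5*p₀^4*p₁^2*p₃^10*h^6 + 6*p₀^4*p₁^2*p₂^4*p₃^6*h^5 - 12*p₀^4*p₁^3*p₂^6*p₃^3*h^4 + 3*p₀^4*p₁^4*p₃^8*h^5 - 6*p₀^4*p₁^5*p₂^2*p₃^5*h^4 - 6*p₀^4*p₁^5*p₂^6*p₃*h^3 - 2*p₀^4*p₁^6*p₃^6*h^4 + 6*p₀^4*p₁^6*p₂^4*p₃^2*h^3 + 3*p₀^4*p₁^8*p₃^4*h^3 + 6*p₀^4*p₁^8*p₂^4*h^2 + 3*p₀^4*p₁^9*p₂^2*p₃*h^2 + 5*p₀^4*p₁^10*p₃^2*h^2 + p₀^4*p₁^12*h + 2*p₀^5*p₂*p₃^10*h^6 + 6*p₀^5*p₂^5*p₃^6*h^5 + 6*p₀^5*p₁^2*p₂*p₃^8*h^5 + 6*p₀^5*p₁^2*p₂^5*p₃^4*h^4 + 8*p₀^5*p₁^4*p₂*p₃^6*h^4 + 6*p₀^5*p₁^4*p₂^5*p₃^2*h^3 + 8*p₀^5*p₁^6*p₂*p₃^4*h^3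 + 6*p₀^5*p₁^6*p₂^5*h^2 + 6*p₀^5*p₁^8*p₂*p₃^2*h^2 + 2*p₀^5*p₁^10*p₂*h + 3*p₀^6*p₂^2*p₃^8*h^5 + p₀^6*p₁*p₃^9*h^5 - 2*p₀^6*p₁*p₂^4*p₃^5*h^4 + 6*p₀^6*p₁^2*p₂^2*p₃^6*h^4 - 4*p₀^6*p₁^3*p₂^4*p₃^3*h^3 + 6*p₀^6*p₁^4*p₂^2*p₃^4*h^3 - 2*p₀^6*p₁^5*p₃^5*h^3 - 2*p₀^6*p₁^5*p₂^4*p₃*h^2 + 6*p₀^6*p₁^6*p₂^2*p₃^2*h^2 + 3*p₀^6*p₁^8*p₂^2*h + p₀^6*p₁^9*p₃*h + 2*p₀^7*p₂^3*p₃^6*h^4 + 2*p₀^7*p₁^2*p₂^3*p₃^4*h^3 + 2*p₀^7*p₁^4*p₂^3*p₃^2*h^2 + 2*p₀^7*p₁^6*p₂^3*h) * (two_eq_zero (K := K))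

private lemma step_scaleg {h f p₀ p₁ p₂ p₃ α : K} (hα : α ≠ 0) (hh : h ∉ sqSet K)
    (he : f = p₀ ^ 4 + p₁ ^ 4 * h + p₂ ^ 4 * h ^ 2 + p₃ ^ 4 * h ^ 3) :
    ∃ s₀ s₁ s₂ s₃ : K,
      α ^ 4 * h ∉ sqSet K ∧
      f = s₀ ^ 4 + s₁ ^ 4 * (α ^ 4 * h) + s₂ ^ 4 * (α ^ 4 * h) ^ 2 + s₃ ^ 4 * (α ^ 4 * h) ^ 3 ∧
      aOf (α ^ 4 * h) s₁ s₂ s₃ = aOf h p₁ p₂ p₃ := by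
  have hα4 : (α ^ 4 : K) ≠ 0 := pow_ne_zero 4 hα
  refine ⟨p₀, p₁ / α, p₂ / α ^ 2, p₃ / α ^ 3, ?_, ?_, ?_⟩
  · rintro ⟨y, hy⟩
    refine hh ⟨y / α ^ 2, ?_⟩
    rw [div_pow, div_eq_iff (pow_ne_zero 2 (pow_ne_zero 2 hα))]
    linear_combination hy
  · rw [he]
    field_simp
    try ring
  · have n1 : ((p₁ / α) ^ 2 * (p₃ / α ^ 3) ^ 2 + (p₂ / α ^ 2) ^ 4) * (α ^ 4 * h)
        = (α ^ 4)⁻¹ * ((p₁ ^ 2 * p₃ ^ 2 + p₂ ^ 4) * h) := by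
      field_simp
      try ring
    have d1 : (p₃ / α ^ 3) ^ 4 * (α ^ 4 * h) ^ 2 + (p₁ / α) ^ 4
        = (α ^ 4)⁻¹ * (p₃ ^ 4 * h ^ 2 + p₁ ^ 4) := by
      field_simp
      try ring
    simp only [aOf]
    rw [n1, d1, mul_div_mul_left _ _ (inv_ne_zero hα4)]

private lemma step_invg {h f p₀ p₁ p₂ p₃ : K} (hh : h ∉ sqSet K)
    (he : f = p₀ ^ 4 + p₁ ^ 4 * h + p₂ ^ 4 * h ^ 2 + p₃ ^ 4 * h ^ 3) :
    ∃ s₀ s₁ s₂ s₃ : K,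
      h⁻¹ ∉ sqSet K ∧
      f = s₀ ^ 4 + s₁ ^ 4 * h⁻¹ + s₂ ^ 4 * h⁻¹ ^ 2 + s₃ ^ 4 * h⁻¹ ^ 3 ∧
      aOf h⁻¹ s₁ s₂ s₃ = aOf h p₁ p₂ p₃ := by
  have hne : h ≠ 0 := notsq_ne_zero hh
  have h6 : h ^ 6 ≠ 0 := pow_ne_zero 6 hne
  have h2 : h ^ 2 ≠ 0 := pow_ne_zero 2 hne
  refine ⟨p₀, p₃ * h, p₂ * h, p₁ * h, ?_, ?_, ?_⟩
  · rintro ⟨y, hy⟩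
    exact hh ⟨y⁻¹, by rw [inv_pow, hy, inv_inv]⟩
  · rw [he]
    field_simp
    try ring
  · have n1 : ((p₃ * h) ^ 2 * (p₁ * h) ^ 2 + (p₂ * h) ^ 4) * h⁻¹
        = h ^ 2 * ((p₁ ^ 2 * p₃ ^ 2 + p₂ ^ 4) * h) := by
      field_simp
      try ring
    have d1 : (p₁ * h) ^ 4 * h⁻¹ ^ 2 + (p₃ * h) ^ 4
        = h ^ 2 * (p₃ ^ 4 * h ^ 2 + p₁ ^ 4) := by
      field_simp
      try ring
    simp only [aOf]
    rw [n1, d1, mul_div_mul_left _ _ h2]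

private lemma step_transg {h f p₀ p₁ p₂ p₃ β : K} (hh : h ∉ sqSet K) (hf : f ∉ sqSet K)
    (he : f = p₀ ^ 4 + p₁ ^ 4 * h + p₂ ^ 4 * h ^ 2 + p₃ ^ 4 * h ^ 3) :
    ∃ s₀ s₁ s₂ s₃ : K,
      h + β ^ 4 ∉ sqSet K ∧
      f = s₀ ^ 4 + s₁ ^ 4 * (h + β ^ 4) + s₂ ^ 4 * (h + β ^ 4) ^ 2 + s₃ ^ 4 * (h + β ^ 4) ^ 3 ∧
      aOf h p₁ p₂ p₃ + aOf (h + β ^ 4) s₁ s₂ s₃ ∈ sqSet K := by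
  have hF := F1_ne hh hf he
  have hD := D1_ne hh hf he
  refine ⟨p₀ + p₁ * β + p₂ * β ^ 2 + p₃ * β ^ 3, p₁ + p₃ * β ^ 2, p₂ + p₃ * β, p₃, ?_, ?_, ?_⟩
  · rintro ⟨y, hy⟩
    refine hh ⟨y + β ^ 2, ?_⟩
    linear_combination hy + (y * β ^ 2 + β ^ 4) * (two_eq_zero (K := K))
  · rw [he]
    linear_combination (-2*p₃^4*β^12 - 3*p₃^4*h*β^8 - 2*p₃^4*h^2*β^4 - 4*p₂*p₃^3*β^11 - 4*p₂*p₃^3*h*β^7 - 2*p₂*p₃^3*h^2*β^3 - 6*p₂^2*p₃^2*β^10 - 6*p₂^2*p₃^2*h*β^6 - 3*p₂^2*p₃^2*h^2*β^2 - 4*p₂^3*p₃*β^9 - 4*p₂^3*p₃*h*β^5 - 2*p₂^3*p₃*h^2*β - p₂^4*β^8 - p₂^4*h*β^4 - 4*p₁*p₃^3*β^10 - 2*p₁*p₃^3*h*β^6 - 6*p₁*p₂*p₃^2*β^9 - 6*p₁*p₂^2*p₃*β^8 - 2*p₁*p₂^3*β^7 - 6*p₁^2*p₃^2*β^8 - 3*p₁^2*p₃^2*h*β^4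 - 6*p₁^2*p₂*p₃*β^7 - 3*p₁^2*p₂^2*β^6 - 4*p₁^3*p₃*β^6 - 2*p₁^3*p₃*h*β^2 - 2*p₁^3*p₂*β^5 - p₁^4*β^4 - 2*p₀*p₃^3*β^9 - 6*p₀*p₂*p₃^2*β^8 - 6*p₀*p₂^2*p₃*β^7 - 2*p₀*p₂^3*β^6 - 6*p₀*p₁*p₃^2*β^7 - 12*p₀*p₁*p₂*p₃*β^6 - 6*p₀*p₁*p₂^2*β^5 - 6*p₀*p₁^2*p₃*β^5 - 6*p₀*p₁^2*p₂*β^4 - 2*p₀*p₁^3*β^3 - 3*p₀^2*p₃^2*β^6 - 6*p₀^2*p₂*p₃*β^5 - 3*p₀^2*p₂^2*β^4 - 6*p₀^2*p₁*p₃*β^4 - 6*p₀^2*p₁*p₂*β^3 - 3*p₀^2*p₁^2*β^2 - 2*p₀^3*p₃*β^3 - 2*p₀^3*p₂*β^2 - 2*p₀^3*p₁*β) * (two_eq_zero (K := K))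
  · have d2 : p₃ ^ 4 * (h + β ^ 4) ^ 2 + (p₁ + p₃ * β ^ 2) ^ 4 = p₃ ^ 4 * h ^ 2 + p₁ ^ 4 := by
      linear_combination (p₃^4*β^8 + p₃^4*h*β^4 + 2*p₁*p₃^3*β^6 + 3*p₁^2*p₃^2*β^4 + 2*p₁^3*p₃*β^2) * (two_eq_zero (K := K))
    refine ⟨β ^ 2 * (p₁ * p₃ + p₂ ^ 2) / (p₁ ^ 2 + p₃ ^ 2 * h), ?_⟩
    simp only [aOf]
    rw [d2, ← add_div, div_pow, div_eq_div_iff (pow_ne_zero 2 hF) hD]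
    linear_combination (-p₃^8*h^2*β^8 - p₃^8*h^3*β^4 - 2*p₂*p₃^7*h^2*β^7 - 2*p₂*p₃^7*h^3*β^3 - 3*p₂^2*p₃^6*h^2*β^6 - 3*p₂^2*p₃^6*h^3*β^2 - 2*p₂^3*p₃^5*h^2*β^5 - 2*p₂^3*p₃^5*h^3*β - p₂^4*p₃^4*h^3 - p₁*p₃^7*h^2*β^6 - p₁*p₃^7*h^3*β^2 + p₁*p₂^2*p₃^5*h^2*β^4 - 2*p₁^2*p₃^6*h*β^8 - 2*p₁^2*p₃^6*h^2*β^4 - p₁^2*p₃^6*h^3 - 4*p₁^2*p₂*p₃^5*h*β^7 - 4*p₁^2*p₂*p₃^5*h^2*β^3 - 6*p₁^2*p₂^2*p₃^4*h*β^6 - 6*p₁^2*p₂^2*p₃^4*h^2*β^2 - 4*p₁^2*p₂^3*p₃^3*h*β^5 - 4*p₁^2*p₂^3*p₃^3*h^2*β - p₁^2*p₂^4*p₃^2*h*β^4 - 2*p₁^2*p₂^4*p₃^2*h^2 - 2*p₁^3*p₃^5*h*β^6 - 2*p₁^3*p₃^5*h^2*β^2 - p₁^4*p₃^4*β^8 -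 2*p₁^4*p₃^4*h*β^4 - 2*p₁^4*p₃^4*h^2 - 2*p₁^4*p₂*p₃^3*β^7 - 2*p₁^4*p₂*p₃^3*h*β^3 - 3*p₁^4*p₂^2*p₃^2*β^6 - 3*p₁^4*p₂^2*p₃^2*h*β^2 - 2*p₁^4*p₂^3*p₃*β^5 - 2*p₁^4*p₂^3*p₃*h*β - p₁^4*p₂^4*h - p₁^5*p₃^3*β^6 - p₁^5*p₃^3*h*β^2 + p₁^5*p₂^2*p₃*β^4 - p₁^6*p₃^2*h) * (two_eq_zero (K := K))

private lemma moebius_decomp {x a b c d : K} (hc : c ≠ 0) (hx : c ^ 4 * x + d ^ 4 ≠ 0) :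
    (a ^ 4 * x + b ^ 4) / (c ^ 4 * x + d ^ 4)
      = ((a * d + b * c) / c) ^ 4 * (c ^ 4 * x + d ^ 4)⁻¹ + (a / c) ^ 4 := by
  have step : ((a * d + b * c) / c) ^ 4 * (c ^ 4 * x + d ^ 4)⁻¹ + (a / c) ^ 4
      = ((a * d + b * c) ^ 4 + a ^ 4 * (c ^ 4 * x + d ^ 4)) / (c ^ 4 * (c ^ 4 * x + d ^ 4)) := by
    field_simp
    try ring
  rw [step, div_eq_div_iff hx (mul_ne_zero (pow_ne_zero 4 hc) hx)]
  linear_combination (-2*a*b^3*c^3*d^5 - 3*a^2*b^2*c^2*d^6 - 2*a^3*b*c*d^7 - a^4*d^8 - 2*x*a*b^3*c^7*d - 3*x*a^2*b^2*c^6*d^2 - 2*x*a^3*b*c^5*d^3 - x*a^4*c^4*d^4) * (two_eq_zero (K := K))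

private lemma quad_unique {h A B A' B' : K} (hh : h ∉ sqSet K)
    (e : A ^ 2 + B ^ 2 * h = A' ^ 2 + B' ^ 2 * h) : A = A' ∧ B = B' := by
  have hB : B = B' := by
    by_cases hBB : B + B' = 0
    · exact eq_of_add_eq_zero' hBB
    · exfalso
      apply hh
      refine ⟨(A + A') / (B + B'), ?_⟩
      rw [div_pow, div_eq_iff (pow_ne_zero 2 hBB)]
      linear_combination e + (A * A' + A' ^ 2 - h * B ^ 2 - h * B * B') * (two_eq_zero (K := K))
  refine ⟨sq_inj ?_, hB⟩
  rw [hB] at e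
  linear_combination e

private lemma quartic_unique {h x₀ x₁ x₂ x₃ y₀ y₁ y₂ y₃ : K} (hh : h ∉ sqSet K)
    (e : x₀ ^ 4 + x₁ ^ 4 * h + x₂ ^ 4 * h ^ 2 + x₃ ^ 4 * h ^ 3
       = y₀ ^ 4 + y₁ ^ 4 * h + y₂ ^ 4 * h ^ 2 + y₃ ^ 4 * h ^ 3) :
    x₀ = y₀ ∧ x₁ = y₁ ∧ x₂ = y₂ ∧ x₃ = y₃ := by
  have e1 : (x₀ ^ 2 + x₂ ^ 2 * h) ^ 2 + (x₁ ^ 2 + x₃ ^ 2 * h) ^ 2 * h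
      = (y₀ ^ 2 + y₂ ^ 2 * h) ^ 2 + (y₁ ^ 2 + y₃ ^ 2 * h) ^ 2 * h := by
    linear_combination e + (x₁ ^ 2 * x₃ ^ 2 * h ^ 2 + x₀ ^ 2 * x₂ ^ 2 * h
      - y₁ ^ 2 * y₃ ^ 2 * h ^ 2 - y₀ ^ 2 * y₂ ^ 2 * h) * (two_eq_zero (K := K))
  obtain ⟨eA, eB⟩ := quad_unique hh e1
  obtain ⟨e0, e2⟩ := quad_unique hh eA
  obtain ⟨e1', e3⟩ := quad_unique hh eB
  exact ⟨e0, e1', e2, e3⟩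

private lemma gamma_f {h f p₀ p₁ p₂ p₃ a b c d : K} (hh : h ∉ sqSet K) (hf : f ∉ sqSet K)
    (he : f = p₀ ^ 4 + p₁ ^ 4 * h + p₂ ^ 4 * h ^ 2 + p₃ ^ 4 * h ^ 3) (hM : a * d ≠ b * c) :
    ∃ t₀ t₁ t₂ t₃ : K,
      (a ^ 4 * f + b ^ 4) / (c ^ 4 * f + d ^ 4)
        = t₀ ^ 4 + t₁ ^ 4 * h + t₂ ^ 4 * h ^ 2 + t₃ ^ 4 * h ^ 3 ∧
      aOf h t₁ t₂ t₃ = aOf h p₁ p₂ p₃ := by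
  by_cases hc : c = 0
  · have hd : d ≠ 0 := by intro e; apply hM; rw [hc, e]; ring
    have ha : a ≠ 0 := by intro e; apply hM; rw [hc, e]; ring
    have key : (a ^ 4 * f + b ^ 4) / (c ^ 4 * f + d ^ 4) = (a / d) ^ 4 * f + (b / d) ^ 4 := by
      rw [hc]
      field_simp
      try ring
    obtain ⟨t₀, t₁, t₂, t₃, _, hexp, haof⟩ := step_afff (div_ne_zero ha hd) (β := b / d) hf he
    exact ⟨t₀, t₁, t₂, t₃, key.trans hexp, haof⟩
  · have hden : c ^ 4 * f + d ^ 4 ≠ 0 := denom_ne hf hM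
    have hdet : a * d + b * c ≠ 0 := fun e => hM (eq_of_add_eq_zero' e)
    obtain ⟨m₀, m₁, m₂, m₃, h1n, h1e, h1a⟩ := step_afff hc (β := d) hf he
    obtain ⟨u₀, u₁, u₂, u₃, h2n, h2e, h2a⟩ := step_invf hh h1n h1e
    obtain ⟨t₀, t₁, t₂, t₃, h3n, h3e, h3a⟩ :=
      step_afff (div_ne_zero hdet hc) (β := a / c) h2n h2e
    refine ⟨t₀, t₁, t₂, t₃, ?_, by rw [h3a, h2a, h1a]⟩
    rw [moebius_decomp hc hden]
    exact h3e

private lemma delta_g {g f p₀ p₁ p₂ p₃ a' b' c' d' : K} (hg : g ∉ sqSet K) (hf : f ∉ sqSet K)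
    (he : f = p₀ ^ 4 + p₁ ^ 4 * g + p₂ ^ 4 * g ^ 2 + p₃ ^ 4 * g ^ 3) (hM : a' * d' ≠ b' * c') :
    (a' ^ 4 * g + b' ^ 4) / (c' ^ 4 * g + d' ^ 4) ∉ sqSet K ∧
    ∃ s₀ s₁ s₂ s₃ : K,
      f = s₀ ^ 4 + s₁ ^ 4 * ((a' ^ 4 * g + b' ^ 4) / (c' ^ 4 * g + d' ^ 4))
        + s₂ ^ 4 * ((a' ^ 4 * g + b' ^ 4) / (c' ^ 4 * g + d' ^ 4)) ^ 2
        + s₃ ^ 4 * ((a' ^ 4 * g + b' ^ 4) / (c' ^ 4 * g + d' ^ 4)) ^ 3 ∧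
      aOf g p₁ p₂ p₃ + aOf ((a' ^ 4 * g + b' ^ 4) / (c' ^ 4 * g + d' ^ 4)) s₁ s₂ s₃ ∈ sqSet K := by
  by_cases hc : c' = 0
  · have hd : d' ≠ 0 := by intro e; apply hM; rw [hc, e]; ring
    have ha : a' ≠ 0 := by intro e; apply hM; rw [hc, e]; ring
    have key : (a' ^ 4 * g + b' ^ 4) / (c' ^ 4 * g + d' ^ 4)
        = (a' / d') ^ 4 * g + (b' / d') ^ 4 := by
      rw [hc]
      field_simp
      ring
    obtain ⟨m₀, m₁, m₂, m₃, h1n, h1e, h1a⟩ := step_scaleg (div_ne_zero ha hd) hg he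
    obtain ⟨s₀, s₁, s₂, s₃, h2n, h2e, h2s⟩ := step_transg (β := b' / d') h1n hf h1e
    rw [h1a] at h2s
    rw [key]
    exact ⟨h2n, s₀, s₁, s₂, s₃, h2e, h2s⟩
  · have hden : c' ^ 4 * g + d' ^ 4 ≠ 0 := denom_ne hg hM
    have hdet : a' * d' + b' * c' ≠ 0 := fun e => hM (eq_of_add_eq_zero' e)
    obtain ⟨m₀, m₁, m₂, m₃, h1n, h1e, h1a⟩ := step_scaleg hc hg he
    obtain ⟨n₀, n₁, n₂, n₃, h2n, h2e, h2s⟩ := step_transg (β := d') h1n hf h1e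
    obtain ⟨o₀, o₁, o₂, o₃, h3n, h3e, h3a⟩ := step_invg h2n h2e
    obtain ⟨w₀, w₁, w₂, w₃, h4n, h4e, h4a⟩ :=
      step_scaleg (div_ne_zero hdet hc) h3n h3e
    obtain ⟨s₀, s₁, s₂, s₃, h5n, h5e, h5s⟩ := step_transg (β := a' / c') h4n hf h4e
    have key : (a' ^ 4 * g + b' ^ 4) / (c' ^ 4 * g + d' ^ 4)
        = ((a' * d' + b' * c') / c') ^ 4 * (c' ^ 4 * g + d' ^ 4)⁻¹ + (a' / c') ^ 4 :=
      moebius_decomp hc hden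
    rw [h1a] at h2s
    rw [h4a, h3a] at h5s
    rw [key]
    exact ⟨h5n, s₀, s₁, s₂, s₃, h5e, sq_chain h2s h5s⟩

end Aux

/-- **`Γ`-invariance**: for `f, g ∈ H` and fractional linear transformations
`γ, δ ∈ Γ = PGL₂(K⁴)`, one has `γf, δg ∈ H` and `a(f,g) ≡ a(γf, δg) (mod K²)`. -/

theorem a_Gamma_invariant (K : Type*) [Field K] [CharP K 2] (hdim : TwoDimOverSquares K)
    (f g : K) (hf : f ∉ sqSet K) (hg : g ∉ sqSet K)
    (a b c d a' b' c' d' : K) (habcd : a * d ≠ b * c) (habcd' : a' * d' ≠ b' * c')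
    (p₀ p₁ p₂ p₃ : K) (hp : f = p₀ ^ 4 + p₁ ^ 4 * g + p₂ ^ 4 * g ^ 2 + p₃ ^ 4 * g ^ 3)
    (q₀ q₁ q₂ q₃ : K)
    (hq : (a ^ 4 * f + b ^ 4) / (c ^ 4 * f + d ^ 4) =
      q₀ ^ 4 + q₁ ^ 4 * ((a' ^ 4 * g + b' ^ 4) / (c' ^ 4 * g + d' ^ 4)) +
      q₂ ^ 4 * ((a' ^ 4 * g + b' ^ 4) / (c' ^ 4 * g + d' ^ 4)) ^ 2 +
      q₃ ^ 4 * ((a' ^ 4 * g + b' ^ 4) / (c' ^ 4 * g + d' ^ 4)) ^ 3) :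
    (a ^ 4 * f + b ^ 4) / (c ^ 4 * f + d ^ 4) ∉ sqSet K ∧
    (a' ^ 4 * g + b' ^ 4) / (c' ^ 4 * g + d' ^ 4) ∉ sqSet K ∧
    aOf g p₁ p₂ p₃ +
      aOf ((a' ^ 4 * g + b' ^ 4) / (c' ^ 4 * g + d' ^ 4)) q₁ q₂ q₃ ∈ sqSet K := by
  obtain ⟨hδ, s₀, s₁, s₂, s₃, hsexp, hsum⟩ := delta_g hg hf hp habcd'
  obtain ⟨t₀, t₁, t₂, t₃, htexp, haof⟩ := gamma_f hδ hf hsexp habcd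
  have hγ := moebius_notsq hf habcd
  obtain ⟨e0, e1, e2, e3⟩ := quartic_unique hδ (hq.symm.trans htexp)
  refine ⟨hγ, hδ, ?_⟩
  rw [e1, e2, e3, haof]
  exact hsum
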